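/- Let f : ℝ → ℝ be continuous, odd, and strictly increasing on [-π, π], and let η : [0, T] → ℝⁿ be a C¹ solution of η̇_i = f(η_{i+1}) - 2f(η_i) + f(η_{i-1}) (cyclic indices) with η(0) ∈ (-π, π)ⁿ. Suppose t₀ ∈ (0, T] is a first time at which max_i |η_i(t₀)| = π and that not all η_i(t₀) are equal to π and not all equal to -π. Then a contradiction follows; i.e., such an exit is impossible unless the trajectory reaches the all-π (or all-(-π)) configuration. -/

import Mathlib

open Real

private lemma deriv_nonneg_of_left_max (g : ℝ → ℝ) (d t₀ : ℝ)
    (h : HasDerivAt g d t₀) (ht : 0 < t₀)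
    (hm : ∀ t ∈ Set.Ico (0:ℝ) t₀, g t < g t₀) : 0 ≤ d := by
  have h1 : Filter.Tendsto (slope g t₀) (nhdsWithin t₀ {t₀}ᶜ) (nhds d) :=
    hasDerivAt_iff_tendsto_slope.mp h
  have h2 : Filter.Tendsto (slope g t₀) (nhdsWithin t₀ (Set.Iio t₀)) (nhds d) :=
    h1.mono_left (nhdsWithin_mono _ (fun x hx => ne_of_lt hx))
  refine ge_of_tendsto h2 ?_
  filter_upwards [Ioo_mem_nhdsLT_of_mem (Set.mem_Ioc.mpr ⟨ht, le_refl _⟩)] with t htm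
  have hnum : g t - g t₀ < 0 := sub_neg.mpr (hm t ⟨le_of_lt htm.1, htm.2⟩)
  have hden : t - t₀ < 0 := sub_neg.mpr htm.2
  have : 0 < (g t - g t₀) / (t - t₀) := div_pos_of_neg_of_neg hnum hden
  have : 0 ≤ (t - t₀)⁻¹ * (g t - g t₀) := by
    rw [← div_eq_inv_mul]; exact this.le
  simpa [slope, vsub_eq_sub] using this

open Fin.NatCast in
private lemma all_pi (n : ℕ) [NeZero n] (f : ℝ → ℝ)
    (hmono : StrictMonoOn f (Set.Icc (-π) π))
    (t₀ : ℝ) (ht₀ : 0 < t₀) (η : ℝ → Fin n → ℝ)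
    (hflow : ∀ i : Fin n, HasDerivAt (fun s => η s i)
      (f (η t₀ (i + 1)) - 2 * f (η t₀ i) + f (η t₀ (i - 1))) t₀)
    (hbefore : ∀ t ∈ Set.Ico (0 : ℝ) t₀, ∀ i : Fin n, |η t i| < π)
    (hle : ∀ i : Fin n, η t₀ i ∈ Set.Icc (-π) π)
    (i₀ : Fin n) (hi₀ : η t₀ i₀ = π) : ∀ i, η t₀ i = π := by
  have hpimem : (π : ℝ) ∈ Set.Icc (-π) π := ⟨neg_le_self pi_pos.le, le_refl _⟩
  have hstep : ∀ i : Fin n, η t₀ i = π → η t₀ (i + 1) = π ∧ η t₀ (i - 1) = π := by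
    intro i hi
    have hd : 0 ≤ f (η t₀ (i + 1)) - 2 * f (η t₀ i) + f (η t₀ (i - 1)) := by
      refine deriv_nonneg_of_left_max _ _ _ (hflow i) ht₀ ?_
      intro t htm
      have := (abs_lt.mp (hbefore t htm i)).2
      rw [hi]; exact this
    have h1 : f (η t₀ (i + 1)) ≤ f π := hmono.monotoneOn (hle _) hpimem (hle _).2
    have h2 : f (η t₀ (i - 1)) ≤ f π := hmono.monotoneOn (hle _) hpimem (hle _).2
    rw [hi] at hd
    have e1 : f (η t₀ (i + 1)) = f π := by linarith
    have e2 : f (η t₀ (i - 1)) = f π := by linarith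
    exact ⟨hmono.injOn (hle _) hpimem e1, hmono.injOn (hle _) hpimem e2⟩
  have hnat : ∀ k : ℕ, η t₀ (i₀ + (k : Fin n)) = π := by
    intro k
    induction k with
    | zero => simpa using hi₀
    | succ m ih =>
        have := (hstep _ ih).1
        have hcast : i₀ + ((m : Fin n) + 1) = i₀ + (m : Fin n) + 1 := (add_assoc _ _ _).symm
        rw [Nat.cast_add, Nat.cast_one, hcast]
        exact this
  intro j
  have := hnat (j - i₀).val
  rwa [Fin.cast_val_eq_self, add_sub_cancel] at this

theorem no_boundary_exit
    (n : ℕ) [NeZero n] (hn : 2 ≤ n) (f : ℝ → ℝ)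
    (hcont : Continuous f)
    (hodd : ∀ x, f (-x) = -f x)
    (hmono : StrictMonoOn f (Set.Icc (-π) π))
    (T : ℝ) (hT : 0 < T)
    (η : ℝ → Fin n → ℝ)
    (hC1 : ∀ i : Fin n, ContDiffOn ℝ 1 (fun t => η t i) (Set.Icc 0 T))
    (hflow : ∀ t ∈ Set.Icc (0 : ℝ) T, ∀ i : Fin n,
      HasDerivAt (fun s => η s i)
        (f (η t (i + 1)) - 2 * f (η t i) + f (η t (i - 1))) t)
    (hinit : ∀ i : Fin n, η 0 i ∈ Set.Ioo (-π) π)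
    (t₀ : ℝ) (ht₀ : t₀ ∈ Set.Ioc 0 T)
    (hbefore : ∀ t ∈ Set.Ico (0 : ℝ) t₀, ∀ i : Fin n, |η t i| < π)
    (hle : ∀ i : Fin n, |η t₀ i| ≤ π)
    (hhit : ∃ i : Fin n, |η t₀ i| = π)
    (hnotallp : ¬ ∀ i : Fin n, η t₀ i = π)
    (hnotallm : ¬ ∀ i : Fin n, η t₀ i = -π) :
    False := by
  obtain ⟨i₀, hi₀⟩ := hhit
  have ht₀T : t₀ ∈ Set.Icc (0:ℝ) T := ⟨ht₀.1.le, ht₀.2⟩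
  have hle' : ∀ i, η t₀ i ∈ Set.Icc (-π) π := fun i => abs_le.mp (hle i)
  rcases (abs_eq (le_of_lt pi_pos)).mp hi₀ with hp | hm
  · exact hnotallp (all_pi n f hmono t₀ ht₀.1 η (hflow t₀ ht₀T) hbefore hle' i₀ hp)
  · apply hnotallm
    have key := all_pi n f hmono t₀ ht₀.1 (fun t i => -η t i)
      (fun i => by
        have h := (hflow t₀ ht₀T i).neg
        have heq : -(f (η t₀ (i + 1)) - 2 * f (η t₀ i) + f (η t₀ (i - 1)))
            = f (-η t₀ (i + 1)) - 2 * f (-η t₀ i) + f (-η t₀ (i - 1)) := by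
          simp only [hodd]; ring
        rw [heq] at h
        exact h)
      (fun t ht i => by simpa [abs_neg] using hbefore t ht i)
      (fun i => ⟨by simpa using neg_le_neg (hle' i).2, by simpa using neg_le_neg (hle' i).1⟩)
      i₀ (by simp [hm])
    intro j
    have hj : -η t₀ j = π := key j
    linarith
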